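/- In the structural model, the bias of the selection-on-observables estimand satisfies τ_soo − τ = β_u γ_u Var(U^{⊥W_Z,W_Y}) / Var(Z^{⊥W_Z,W_Y}), where A^{⊥B} denotes the residual of A after population linear projection onto B (and any covariates partialled out). -/

import Mathlib

open Submodule RealInnerProductSpace

/-- Residual of `A` after orthogonal projection onto the span of the finite set `S`
(population linear projection residual `A^{⊥S}`). -/
noncomputable def resid {H : Type*} [NormedAddCommGroup H] [InnerProductSpace ℝ H]
    [CompleteSpace H] (A : H) (S : Set H) (hS : S.Finite) : H :=
  haveI := hS.to_subtype
  haveI : FiniteDimensional ℝ (span ℝ S) := FiniteDimensional.span_of_finite ℝ hS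
  A - (orthogonalProjection (span ℝ S) A : H)

/-- Bias of the selection-on-observables estimand:
`τ_soo − τ = β_u γ_u Var(U^{⊥W_Z,W_Y}) / Var(Z^{⊥W_Z,W_Y})`, where `τ_soo` is the
coefficient on `Z` in the population regression of `Y` on `(Z, W_Z, W_Y)` (characterized
by the normal equations). Random variables are modeled as vectors in a real Hilbert
space with inner product = covariance. -/
theorem stmt_6 {H : Type*} [NormedAddCommGroup H] [InnerProductSpace ℝ H] [CompleteSpace H]
    (Y Z WZ WY U εy εz εwy εwz : H)
    (τ βu βwy βwz γu γwy γwz αu αwz φu : ℝ)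
    (hY : Y = βu • U + βwy • WY + βwz • WZ + τ • Z + εy)
    (hZ : Z = γu • U + γwy • WY + γwz • WZ + εz)
    (hWY : WY = αu • U + αwz • WZ + εwy)
    (hWZ : WZ = φu • U + εwz)
    (horth : ∀ i j : Fin 5, i ≠ j →
      ⟪(![εy, εz, εwy, εwz, U]) i, (![εy, εz, εwy, εwz, U]) j⟫ = 0)
    (hpos : ∀ i : Fin 5, 0 < ⟪(![εy, εz, εwy, εwz, U]) i, (![εy, εz, εwy, εwz, U]) i⟫)
    (hli : LinearIndependent ℝ ![Z, WZ, WY])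
    (hvarZ : 0 < ⟪resid Z {WZ, WY} (Set.toFinite _), resid Z {WZ, WY} (Set.toFinite _)⟫) :
    ∀ t a b : ℝ,
      ⟪Y - (t • Z + a • WZ + b • WY), Z⟫ = 0 →
      ⟪Y - (t • Z + a • WZ + b • WY), WZ⟫ = 0 →
      ⟪Y - (t • Z + a • WZ + b • WY), WY⟫ = 0 →
      t - τ = βu * γu *
        ⟪resid U {WZ, WY} (Set.toFinite _), resid U {WZ, WY} (Set.toFinite _)⟫ /
        ⟪resid Z {WZ, WY} (Set.toFinite _), resid Z {WZ, WY} (Set.toFinite _)⟫ := by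
  intro t a b h1 h2 h3
  have hSfin : ({WZ, WY} : Set H).Finite := Set.toFinite _
  haveI := hSfin.to_subtype
  haveI : FiniteDimensional ℝ (span ℝ ({WZ, WY} : Set H)) :=
    FiniteDimensional.span_of_finite ℝ hSfin
  set K : Submodule ℝ H := span ℝ ({WZ, WY} : Set H) with hKdef
  set rZ := resid Z {WZ, WY} (Set.toFinite _) with hrZ
  set rU := resid U {WZ, WY} (Set.toFinite _) with hrU
  have hWZK : WZ ∈ K := Submodule.subset_span (by simp)
  have hWYK : WY ∈ K := Submodule.subset_span (by simp)
  have hperp : ∀ A : H, resid A {WZ, WY} (Set.toFinite _) ∈ Kᗮ := fun A =>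
    Submodule.sub_starProjection_mem_orthogonal (K := K) A
  have hmemK : ∀ A : H, A - resid A {WZ, WY} (Set.toFinite _) ∈ K := by
    intro A
    have h : A - resid A {WZ, WY} (Set.toFinite _) = (orthogonalProjection K A : H) := by
      simp [resid, hKdef]
    rw [h]; exact SetLike.coe_mem _
  have hey_U : ⟪εy, U⟫ = 0 := horth 0 4 (by decide)
  have hey_ez : ⟪εy, εz⟫ = 0 := horth 0 1 (by decide)
  have hey_ewy : ⟪εy, εwy⟫ = 0 := horth 0 2 (by decide)
  have hey_ewz : ⟪εy, εwz⟫ = 0 := horth 0 3 (by decide)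
  have hez_U : ⟪εz, U⟫ = 0 := horth 1 4 (by decide)
  have hez_ewy : ⟪εz, εwy⟫ = 0 := horth 1 2 (by decide)
  have hez_ewz : ⟪εz, εwz⟫ = 0 := horth 1 3 (by decide)
  have hU_ez : ⟪U, εz⟫ = 0 := by rw [real_inner_comm]; exact hez_U
  set N : Submodule ℝ H := span ℝ ({U, εwy, εwz} : Set H) with hNdef
  have hUN : U ∈ N := Submodule.subset_span (by simp)
  have hewyN : εwy ∈ N := Submodule.subset_span (by simp)
  have hewzN : εwz ∈ N := Submodule.subset_span (by simp)
  have hWZN : WZ ∈ N := by rw [hWZ]; exact N.add_mem (N.smul_mem _ hUN) hewzN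
  have hWYN : WY ∈ N := by
    rw [hWY]; exact N.add_mem (N.add_mem (N.smul_mem _ hUN) (N.smul_mem _ hWZN)) hewyN
  have hKN : K ≤ N := Submodule.span_le.mpr (by
    rintro x (rfl | rfl)
    · exact hWZN
    · exact hWYN)
  have heyN : ∀ v ∈ N, ⟪εy, v⟫ = 0 := by
    intro v hv
    induction hv using Submodule.span_induction with
    | mem x hx =>
      rcases hx with rfl | rfl | rfl
      exacts [hey_U, hey_ewy, hey_ewz]
    | zero => simp
    | add x y _ _ hx hy => rw [inner_add_right, hx, hy]; ring
    | smul c x _ hx => rw [inner_smul_right, hx]; ring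
  have hezN : ∀ v ∈ N, ⟪εz, v⟫ = 0 := by
    intro v hv
    induction hv using Submodule.span_induction with
    | mem x hx =>
      rcases hx with rfl | rfl | rfl
      exacts [hez_U, hez_ewy, hez_ewz]
    | zero => simp
    | add x y _ _ hx hy => rw [inner_add_right, hx, hy]; ring
    | smul c x _ hx => rw [inner_smul_right, hx]; ring
  -- inner products with rZ
  have hWZrZ : ⟪WZ, rZ⟫ = 0 := Submodule.inner_right_of_mem_orthogonal hWZK (hperp Z)
  have hWYrZ : ⟪WY, rZ⟫ = 0 := Submodule.inner_right_of_mem_orthogonal hWYK (hperp Z)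
  have hZsub : ⟪Z - rZ, rZ⟫ = 0 :=
    Submodule.inner_right_of_mem_orthogonal (hmemK Z) (hperp Z)
  have hZrZ : ⟪Z, rZ⟫ = ⟪rZ, rZ⟫ := by
    rw [inner_sub_left] at hZsub; linarith
  have heyrZ : ⟪εy, rZ⟫ = 0 := by
    have h1' : ⟪εy, Z⟫ = 0 := by
      rw [hZ]
      simp only [inner_add_right, inner_smul_right]
      rw [hey_U, hey_ez, heyN WY hWYN, heyN WZ hWZN]; ring
    have h2' : ⟪εy, Z - rZ⟫ = 0 := heyN _ (hKN (hmemK Z))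
    have : ⟪εy, rZ⟫ = ⟪εy, Z⟫ - ⟪εy, Z - rZ⟫ := by
      rw [inner_sub_right]; ring
    rw [this, h1', h2']; ring
  -- ⟪U, rZ⟫ = γu * ⟪rU, rU⟫
  have hUrZ : ⟪U, rZ⟫ = γu * ⟪rU, rU⟫ := by
    have e1 : ⟪U, rZ⟫ = ⟪rU, rZ⟫ := by
      have h := Submodule.inner_right_of_mem_orthogonal (hmemK U) (hperp Z)
      rw [inner_sub_left] at h
      rw [← hrU, ← hrZ] at h
      linarith
    have e2 : ⟪rU, rZ⟫ = ⟪rU, Z⟫ := by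
      have h : ⟪Z - rZ, rU⟫ = 0 :=
        Submodule.inner_right_of_mem_orthogonal (hmemK Z) (hperp U)
      rw [inner_sub_left] at h
      calc ⟪rU, rZ⟫ = ⟪rZ, rU⟫ := real_inner_comm _ _
        _ = ⟪Z, rU⟫ := by linarith
        _ = ⟪rU, Z⟫ := real_inner_comm _ _
    have hrUWY : ⟪rU, WY⟫ = 0 := by
      rw [real_inner_comm]
      exact Submodule.inner_right_of_mem_orthogonal hWYK (hperp U)
    have hrUWZ : ⟪rU, WZ⟫ = 0 := by
      rw [real_inner_comm]
      exact Submodule.inner_right_of_mem_orthogonal hWZK (hperp U)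
    have hrUU : ⟪rU, U⟫ = ⟪rU, rU⟫ := by
      have h : ⟪U - rU, rU⟫ = 0 :=
        Submodule.inner_right_of_mem_orthogonal (hmemK U) (hperp U)
      rw [inner_sub_left] at h
      calc ⟪rU, U⟫ = ⟪U, rU⟫ := real_inner_comm _ _
        _ = ⟪rU, rU⟫ := by linarith
    have hrUez : ⟪rU, εz⟫ = 0 := by
      have h : ⟪εz, U - rU⟫ = 0 := hezN _ (hKN (hmemK U))
      rw [inner_sub_right] at h
      rw [real_inner_comm]
      linarith [hez_U]
    rw [e1, e2, hZ]
    simp only [inner_add_right, inner_smul_right]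
    rw [hrUU, hrUWY, hrUWZ, hrUez]; ring
  -- pair the normal-equation residual with rZ
  have hRK : ∀ v ∈ K, ⟪Y - (t • Z + a • WZ + b • WY), v⟫ = 0 := by
    intro v hv
    induction hv using Submodule.span_induction with
    | mem x hx =>
      rcases hx with rfl | rfl
      exacts [h2, h3]
    | zero => simp
    | add x y _ _ hx hy => rw [inner_add_right, hx, hy]; ring
    | smul c x _ hx => rw [inner_smul_right, hx]; ring
  have hRrZ : ⟪Y - (t • Z + a • WZ + b • WY), rZ⟫ = 0 := by
    have h : ⟪Y - (t • Z + a • WZ + b • WY), rZ⟫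
        = ⟪Y - (t • Z + a • WZ + b • WY), Z⟫
          - ⟪Y - (t • Z + a • WZ + b • WY), Z - rZ⟫ := by
      rw [inner_sub_right]; ring
    rw [h, h1, hRK _ (hmemK Z)]; ring
  rw [hY] at hRrZ
  simp only [inner_sub_right, inner_add_left, inner_sub_left, inner_smul_left,
    inner_add_right, inner_smul_right, RCLike.conj_to_real, conj_trivial] at hRrZ
  rw [hUrZ, heyrZ, hZrZ, hWZrZ, hWYrZ] at hRrZ
  field_simp
  nlinarith [hRrZ, hvarZ]
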